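/- Lipschitz property for the SIS process (Lemma 4B): let h > 0 and μ > 0, let A be a random edge-timer vector whose components (A(e))_{e∈E(G)} are independent exponential rate-1 random variables, and let B be a random recovery-timer vector whose components (B(j))_{j∈V} are independent exponential rate-μ random variables, with A and B independent of each other. Define f(x,(a,b)) = (g(x,(a,b)) − x)/h, a vector in ℝ^V. Then for all states x and z, E[‖f(x,(A,B)) − f(z,(A,B))‖₁] ≤ (k + μ)·‖x − z‖₁. -/

import Mathlib

open MeasureTheory ProbabilityTheory Real

/-- View a Boolean infection state as a real number (`true ↦ 1`, `false ↦ 0`). -/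
def boolToR (b : Bool) : ℝ := if b then 1 else 0

open Classical in
/-- One step of the SIS discrete-time simulation (DTS): a susceptible node `j` becomes
infected iff some infected neighbor's edge timer fires within time `h`; an infected node
`j` recovers iff its recovery timer fires within time `h`. -/
noncomputable def sisDTS {V : Type*} (G : SimpleGraph V) (h : ℝ) (x : V → Bool)
    (a : G.edgeSet → ℝ) (b : V → ℝ) : V → Bool := fun j =>
  if x j = true then (if b j ≤ h then false else true)
  else
    if ∃ j', ∃ hadj : G.Adj j j',
        x j' = true ∧ a ⟨s(j, j'), (SimpleGraph.mem_edgeSet G).mpr hadj⟩ ≤ h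
    then true else false

/-- `f(x,(a,b)) = (g(x,(a,b)) - x)/h`, the incremental rate of change of the SIS DTS, as a
vector in `ℝ^V`. -/
noncomputable def sisF {V : Type*} (G : SimpleGraph V) (h : ℝ) (x : V → Bool)
    (a : G.edgeSet → ℝ) (b : V → ℝ) : V → ℝ := fun j =>
  (boolToR (sisDTS G h x a b j) - boolToR (x j)) / h

/-- indicator that `x` and `z` differ at `j` -/
def diffInd {V : Type*} (x z : V → Bool) (j : V) : ℝ := if x j = z j then 0 else 1

open Classical in
/-- combinatorial weight for the directed pair `(j, j')` -/
noncomputable def cInd {V : Type*} (x z : V → Bool) (j j' : V) : ℝ :=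
  if (x j = false ∧ z j = false ∧ x j' ≠ z j') ∨ (x j ≠ z j ∧ (x j' = true ∨ z j' = true))
  then 1 else 0

open Classical in
noncomputable def nbrTerm {V : Type*} (G : SimpleGraph V) (h : ℝ) (x z : V → Bool)
    (a : G.edgeSet → ℝ) (j j' : V) : ℝ :=
  if hadj : G.Adj j j' then
    (if a ⟨s(j, j'), (SimpleGraph.mem_edgeSet G).mpr hadj⟩ ≤ h then cInd x z j j' else 0)
  else 0

open Classical in
noncomputable def cAdj {V : Type*} (G : SimpleGraph V) (x z : V → Bool) (j j' : V) : ℝ :=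
  if G.Adj j j' then cInd x z j j' else 0

lemma diffInd_nonneg {V : Type*} (x z : V → Bool) (j : V) : 0 ≤ diffInd x z j := by
  unfold diffInd; split_ifs <;> norm_num

lemma cInd_nonneg {V : Type*} (x z : V → Bool) (j j' : V) : 0 ≤ cInd x z j j' := by
  unfold cInd; split_ifs <;> norm_num

lemma nbrTerm_nonneg {V : Type*} (G : SimpleGraph V) (h : ℝ) (x z : V → Bool)
    (a : G.edgeSet → ℝ) (j j' : V) : 0 ≤ nbrTerm G h x z a j j' := by
  unfold nbrTerm; split_ifs <;> first | exact cInd_nonneg x z j j' | norm_num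

lemma cAdj_nonneg {V : Type*} (G : SimpleGraph V) (x z : V → Bool) (j j' : V) :
    0 ≤ cAdj G x z j j' := by
  unfold cAdj; split_ifs <;> first | exact cInd_nonneg x z j j' | norm_num

lemma one_le_sum_nbr {V : Type*} [Fintype V] (G : SimpleGraph V) (h : ℝ) (x z : V → Bool)
    (a : G.edgeSet → ℝ) {j j'0 : V} (hadj : G.Adj j j'0)
    (ha : a ⟨s(j, j'0), (SimpleGraph.mem_edgeSet G).mpr hadj⟩ ≤ h)
    (hc : cInd x z j j'0 = 1) : (1 : ℝ) ≤ ∑ j' : V, nbrTerm G h x z a j j' := by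
  have hterm : nbrTerm G h x z a j j'0 = 1 := by
    rw [nbrTerm, dif_pos hadj, if_pos ha, hc]
  calc (1:ℝ) = nbrTerm G h x z a j j'0 := hterm.symm
    _ ≤ ∑ j' : V, nbrTerm G h x z a j j' :=
        Finset.single_le_sum (fun i _ => nbrTerm_nonneg G h x z a j i) (Finset.mem_univ j'0)

open Classical in
lemma sisDTS_of_false {V : Type*} (G : SimpleGraph V) (h : ℝ) (x : V → Bool)
    (a : G.edgeSet → ℝ) (b : V → ℝ) {j : V} (hxj : x j = false) :
    sisDTS G h x a b j = if ∃ j', ∃ hadj : G.Adj j j',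
        x j' = true ∧ a ⟨s(j, j'), (SimpleGraph.mem_edgeSet G).mpr hadj⟩ ≤ h
      then true else false := by
  simp only [sisDTS, hxj]
  rw [if_neg]
  simp

open Classical in
lemma sisDTS_of_true {V : Type*} (G : SimpleGraph V) (h : ℝ) (x : V → Bool)
    (a : G.edgeSet → ℝ) (b : V → ℝ) {j : V} (hxj : x j = true) :
    sisDTS G h x a b j = if b j ≤ h then false else true := by
  simp only [sisDTS, hxj]
  simp

lemma pointwise_bound {V : Type*} [Fintype V] (G : SimpleGraph V) {h : ℝ} (h0 : 0 < h)
    (x z : V → Bool) (a : G.edgeSet → ℝ) (b : V → ℝ) (j : V) :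
    |sisF G h x a b j - sisF G h z a b j| ≤
      ((if x j = z j then 0 else if b j ≤ h then (1:ℝ) else 0) +
        ∑ j' : V, nbrTerm G h x z a j j') / h := by
  have hsum : (0:ℝ) ≤ ∑ j' : V, nbrTerm G h x z a j j' :=
    Finset.sum_nonneg fun i _ => nbrTerm_nonneg G h x z a j i
  have hnum : |(boolToR (sisDTS G h x a b j) - boolToR (x j)) -
      (boolToR (sisDTS G h z a b j) - boolToR (z j))| ≤
      (if x j = z j then 0 else if b j ≤ h then (1:ℝ) else 0) +
        ∑ j' : V, nbrTerm G h x z a j j' := by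
    cases hxj : x j <;> cases hzj : z j
    · -- both false
      rw [sisDTS_of_false G h x a b hxj, sisDTS_of_false G h z a b hzj,
        if_pos rfl]
      by_cases hEx : ∃ j', ∃ hadj : G.Adj j j',
          x j' = true ∧ a ⟨s(j, j'), (SimpleGraph.mem_edgeSet G).mpr hadj⟩ ≤ h <;>
        by_cases hEz : ∃ j', ∃ hadj : G.Adj j j',
          z j' = true ∧ a ⟨s(j, j'), (SimpleGraph.mem_edgeSet G).mpr hadj⟩ ≤ h
      · rw [if_pos hEx, if_pos hEz]; simp [boolToR]; linarith
      · obtain ⟨j'0, hadj, hx0, ha0⟩ := hEx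
        have hz0 : z j'0 = false := by
          cases hzz : z j'0
          · rfl
          · exact absurd ⟨j'0, hadj, hzz, ha0⟩ hEz
        have hc : cInd x z j j'0 = 1 := by
          rw [cInd, if_pos (Or.inl ⟨hxj, hzj, by rw [hx0, hz0]; simp⟩)]
        have h1 := one_le_sum_nbr G h x z a hadj ha0 hc
        rw [if_pos ⟨j'0, hadj, hx0, ha0⟩, if_neg hEz]
        simp [boolToR, abs_le]
        first | linarith | (constructor <;> linarith)
      · obtain ⟨j'0, hadj, hz0, ha0⟩ := hEz
        have hx0 : x j'0 = false := by
          cases hxx : x j'0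
          · rfl
          · exact absurd ⟨j'0, hadj, hxx, ha0⟩ hEx
        have hc : cInd x z j j'0 = 1 := by
          rw [cInd, if_pos (Or.inl ⟨hxj, hzj, by rw [hx0, hz0]; simp⟩)]
        have h1 := one_le_sum_nbr G h x z a hadj ha0 hc
        rw [if_neg hEx, if_pos ⟨j'0, hadj, hz0, ha0⟩]
        simp [boolToR, abs_le]
        first | linarith | (constructor <;> linarith)
      · rw [if_neg hEx, if_neg hEz]; simp [boolToR]; linarith
    · -- x false, z true
      rw [sisDTS_of_false G h x a b hxj, sisDTS_of_true G h z a b hzj,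
        if_neg (show ¬((false:Bool) = true) by simp)]
      by_cases hEx : ∃ j', ∃ hadj : G.Adj j j',
          x j' = true ∧ a ⟨s(j, j'), (SimpleGraph.mem_edgeSet G).mpr hadj⟩ ≤ h
      · obtain ⟨j'0, hadj, hx0, ha0⟩ := hEx
        have hc : cInd x z j j'0 = 1 := by
          rw [cInd, if_pos (Or.inr ⟨by rw [hxj, hzj]; simp, Or.inl hx0⟩)]
        have h1 := one_le_sum_nbr G h x z a hadj ha0 hc
        rw [if_pos ⟨j'0, hadj, hx0, ha0⟩]
        by_cases hb : b j ≤ h <;>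
          [rw [if_pos hb, if_pos hb]; rw [if_neg hb, if_neg hb]] <;>
          simp [boolToR, abs_le] <;>
          first | linarith | (constructor <;> linarith)
      · rw [if_neg hEx]
        by_cases hb : b j ≤ h <;>
          [rw [if_pos hb, if_pos hb]; rw [if_neg hb, if_neg hb]] <;>
          simp [boolToR, abs_le] <;> first | linarith | (constructor <;> linarith)
    · -- x true, z false
      rw [sisDTS_of_true G h x a b hxj, sisDTS_of_false G h z a b hzj,
        if_neg (show ¬((true:Bool) = false) by simp)]
      by_cases hEz : ∃ j', ∃ hadj : G.Adj j j',
          z j' = true ∧ a ⟨s(j, j'), (SimpleGraph.mem_edgeSet G).mpr hadj⟩ ≤ h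
      · obtain ⟨j'0, hadj, hz0, ha0⟩ := hEz
        have hc : cInd x z j j'0 = 1 := by
          rw [cInd, if_pos (Or.inr ⟨by rw [hxj, hzj]; simp, Or.inr hz0⟩)]
        have h1 := one_le_sum_nbr G h x z a hadj ha0 hc
        by_cases hb : b j ≤ h <;>
          [rw [if_pos hb, if_pos hb]; rw [if_neg hb, if_neg hb]] <;>
          rw [if_pos ⟨j'0, hadj, hz0, ha0⟩] <;>
          simp [boolToR, abs_le] <;> first | linarith | (constructor <;> linarith)
      · rw [if_neg hEz]
        by_cases hb : b j ≤ h <;>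
          [rw [if_pos hb, if_pos hb]; rw [if_neg hb, if_neg hb]] <;>
          simp [boolToR, abs_le] <;> first | linarith | (constructor <;> linarith)
    · -- both true
      rw [sisDTS_of_true G h x a b hxj, sisDTS_of_true G h z a b hzj,
        if_pos rfl]
      by_cases hb : b j ≤ h <;>
        [rw [if_pos hb]; rw [if_neg hb]] <;>
        simp [boolToR] <;> linarith
  calc |sisF G h x a b j - sisF G h z a b j|
      = |(boolToR (sisDTS G h x a b j) - boolToR (x j)) -
          (boolToR (sisDTS G h z a b j) - boolToR (z j))| / h := by
        rw [sisF, sisF, div_sub_div_same, abs_div, abs_of_pos h0]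
    _ ≤ _ := by gcongr

open Classical in
lemma key_pair {V : Type*} (G : SimpleGraph V) (x z : V → Bool) (j j' : V) :
    cAdj G x z j j' + cAdj G x z j' j ≤
      (if G.Adj j j' then (1:ℝ) else 0) * (diffInd x z j + diffInd x z j') := by
  classical
  by_cases hadj : G.Adj j j'
  · rw [cAdj, cAdj, if_pos hadj, if_pos hadj.symm, if_pos hadj, one_mul]
    unfold cInd diffInd
    cases hx : x j <;> cases hz : z j <;> cases hx' : x j' <;> cases hz' : z j' <;>
      simp <;> norm_num
  · have hadj' : ¬ G.Adj j' j := fun hh => hadj hh.symm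
    rw [cAdj, cAdj, if_neg hadj, if_neg hadj', if_neg hadj, zero_mul]
    norm_num

open Classical in
lemma deg_le {V : Type*} [Fintype V] (G : SimpleGraph V) (k : ℕ)
    (hdeg : ∀ j : V, (G.neighborSet j).ncard ≤ k) (j : V) :
    ∑ j' : V, (if G.Adj j j' then (1:ℝ) else 0) ≤ k := by
  classical
  rw [Finset.sum_boole]
  have h2 : (Finset.univ.filter fun j' => G.Adj j j').card = (G.neighborSet j).ncard := by
    rw [Set.ncard_eq_toFinset_card']
    congr 1
    ext j'
    simp [SimpleGraph.neighborSet]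
    exact Set.mem_toFinset.symm
  rw [h2]
  exact_mod_cast hdeg j

open Classical in
lemma sum_cAdj_le {V : Type*} [Fintype V] (G : SimpleGraph V) (k : ℕ)
    (hdeg : ∀ j : V, (G.neighborSet j).ncard ≤ k) (x z : V → Bool) :
    ∑ j : V, ∑ j' : V, cAdj G x z j j' ≤ (k : ℝ) * ∑ j : V, diffInd x z j := by
  classical
  have hsymm : ∑ j : V, ∑ j' : V, cAdj G x z j' j = ∑ j : V, ∑ j' : V, cAdj G x z j j' :=
    Finset.sum_comm
  have H : (2:ℝ) * (∑ j : V, ∑ j' : V, cAdj G x z j j') ≤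
      ∑ j : V, ∑ j' : V, (if G.Adj j j' then (1:ℝ) else 0) * (diffInd x z j + diffInd x z j') := by
    have e1 : (2:ℝ) * (∑ j : V, ∑ j' : V, cAdj G x z j j') =
        ∑ j : V, ∑ j' : V, (cAdj G x z j j' + cAdj G x z j' j) := by
      simp only [Finset.sum_add_distrib, hsymm]; ring
    rw [e1]
    exact Finset.sum_le_sum fun j _ => Finset.sum_le_sum fun j' _ => key_pair G x z j j'
  have H2 : ∑ j : V, ∑ j' : V, (if G.Adj j j' then (1:ℝ) else 0) *
        (diffInd x z j + diffInd x z j') ≤ 2 * ((k:ℝ) * ∑ j : V, diffInd x z j) := by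
    have e2 : ∑ j : V, ∑ j' : V, (if G.Adj j j' then (1:ℝ) else 0) *
        (diffInd x z j + diffInd x z j') =
        (∑ j : V, (∑ j' : V, (if G.Adj j j' then (1:ℝ) else 0)) * diffInd x z j) +
        ∑ j' : V, (∑ j : V, (if G.Adj j j' then (1:ℝ) else 0)) * diffInd x z j' := by
      simp only [mul_add, Finset.sum_add_distrib, Finset.sum_mul]
      congr 1
      rw [Finset.sum_comm]
    rw [e2]
    have b1 : ∑ j : V, (∑ j' : V, (if G.Adj j j' then (1:ℝ) else 0)) * diffInd x z j ≤
        (k:ℝ) * ∑ j : V, diffInd x z j := by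
      rw [Finset.mul_sum]
      exact Finset.sum_le_sum fun j _ =>
        mul_le_mul_of_nonneg_right (deg_le G k hdeg j) (diffInd_nonneg x z j)
    have b2 : ∑ j' : V, (∑ j : V, (if G.Adj j j' then (1:ℝ) else 0)) * diffInd x z j' ≤
        (k:ℝ) * ∑ j : V, diffInd x z j := by
      rw [Finset.mul_sum]
      refine Finset.sum_le_sum fun j' _ =>
        mul_le_mul_of_nonneg_right ?_ (diffInd_nonneg x z j')
      have : ∑ j : V, (if G.Adj j j' then (1:ℝ) else 0) =
          ∑ j : V, (if G.Adj j' j then (1:ℝ) else 0) := by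
        refine Finset.sum_congr rfl fun j _ => by rw [G.adj_comm]
      rw [this]
      exact deg_le G k hdeg j'
    linarith
  linarith

lemma integrable_ind {Ω : Type*} [MeasureSpace Ω] [IsProbabilityMeasure (ℙ : Measure Ω)]
    (X : Ω → ℝ) (hX : Measurable X) (h : ℝ) :
    Integrable (fun ω => if X ω ≤ h then (1:ℝ) else 0) ℙ := by
  have hs : MeasurableSet (X ⁻¹' Set.Iic h) := hX measurableSet_Iic
  have hfun : (fun ω => if X ω ≤ h then (1:ℝ) else 0) =
      (X ⁻¹' Set.Iic h).indicator (fun _ => 1) := by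
    funext ω; by_cases hω : X ω ≤ h <;> simp [Set.indicator_apply, hω]
  rw [hfun]
  exact (integrable_const 1).indicator hs

lemma integral_ind_le {Ω : Type*} [MeasureSpace Ω] [IsProbabilityMeasure (ℙ : Measure Ω)]
    {r h : ℝ} (hr : 0 < r) (h0 : 0 ≤ h) (X : Ω → ℝ) (hX : Measurable X)
    (hdist : Measure.map X ℙ = expMeasure r) :
    ∫ ω, (if X ω ≤ h then (1:ℝ) else 0) ∂ℙ ≤ r * h := by
  have hs : MeasurableSet (X ⁻¹' Set.Iic h) := hX measurableSet_Iic
  have hfun : (fun ω => if X ω ≤ h then (1:ℝ) else 0) =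
      (X ⁻¹' Set.Iic h).indicator (fun _ => 1) := by
    funext ω; by_cases hω : X ω ≤ h <;> simp [Set.indicator_apply, hω]
  rw [hfun, integral_indicator_const (1:ℝ) hs, smul_eq_mul, mul_one]
  have hmap : ℙ (X ⁻¹' Set.Iic h) = expMeasure r (Set.Iic h) := by
    rw [← hdist, Measure.map_apply hX measurableSet_Iic]
  rw [measureReal_def, hmap]
  haveI := isProbabilityMeasure_expMeasure hr
  have hc : (expMeasure r (Set.Iic h)).toReal = cdf (expMeasure r) h :=
    (cdf_eq_real (μ := expMeasure r) h).symm
  rw [hc]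
  have h1 := cdf_expMeasure_eq hr h
  rw [if_pos h0] at h1
  have hexp := Real.add_one_le_exp (-(r*h))
  rw [h1]
  linarith

/-- **Lemma 4B (Lipschitz property for the SIS process).** Let `h > 0` and `μ > 0`, let the
edge timers `A(e)`, `e ∈ E(G)`, be independent exponential rate-1 random variables, and let
the recovery timers `B(j)`, `j ∈ V`, be independent exponential rate-`μ` random variables,
with `A` and `B` independent of each other (equivalently, the combined family of all
components of `A` and `B` is independent).  Then for all states `x` and `z`,
`E[‖f(x,(A,B)) - f(z,(A,B))‖₁] ≤ (k + μ) * ‖x - z‖₁`. -/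
theorem sis_lipschitz {Ω : Type*} [MeasureSpace Ω]
    [IsProbabilityMeasure (ℙ : Measure Ω)]
    {V : Type*} [Fintype V] (G : SimpleGraph V) (k : ℕ)
    (hdeg : ∀ j : V, (G.neighborSet j).ncard ≤ k)
    (h μ : ℝ) (h0 : 0 < h) (hμ : 0 < μ)
    (A : Ω → G.edgeSet → ℝ) (B : Ω → V → ℝ)
    (hAmeas : ∀ e : G.edgeSet, Measurable fun ω => A ω e)
    (hBmeas : ∀ j : V, Measurable fun ω => B ω j)
    (hindep : iIndepFun
      (fun (s : G.edgeSet ⊕ V) ω => Sum.elim (fun e => A ω e) (fun j => B ω j) s) ℙ)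
    (hAdist : ∀ e : G.edgeSet, Measure.map (fun ω => A ω e) ℙ = expMeasure 1)
    (hBdist : ∀ j : V, Measure.map (fun ω => B ω j) ℙ = expMeasure μ)
    (x z : V → Bool) :
    ∫ ω, ∑ j : V, |sisF G h x (A ω) (B ω) j - sisF G h z (A ω) (B ω) j| ∂ℙ ≤
      ((k : ℝ) + μ) * ∑ j : V, |boolToR (x j) - boolToR (z j)| := by
  classical
  -- `rec` integrability
  have IArec : ∀ j : V, Integrable
      (fun ω => if x j = z j then (0:ℝ) else if B ω j ≤ h then 1 else 0) ℙ := by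
    intro j
    by_cases hxz : x j = z j
    · simp only [hxz, if_pos rfl]
      exact integrable_const 0
    · simp only [if_neg hxz]
      exact integrable_ind (fun ω => B ω j) (hBmeas j) h
  -- neighbor-term rewriting and integrability
  have hnbr_eq : ∀ j j' : V, ∀ hadj : G.Adj j j',
      (fun ω => nbrTerm G h x z (A ω) j j') = fun ω =>
        cInd x z j j' *
          (if A ω ⟨s(j, j'), (SimpleGraph.mem_edgeSet G).mpr hadj⟩ ≤ h then (1:ℝ) else 0) := by
    intro j j' hadj
    funext ω
    rw [nbrTerm, dif_pos hadj]
    split_ifs <;> ring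
  have hnbr_zero : ∀ j j' : V, ¬ G.Adj j j' →
      (fun ω => nbrTerm G h x z (A ω) j j') = fun _ => (0:ℝ) := by
    intro j j' hadj
    funext ω
    rw [nbrTerm, dif_neg hadj]
  have IA : ∀ j j' : V, Integrable (fun ω => nbrTerm G h x z (A ω) j j') ℙ := by
    intro j j'
    by_cases hadj : G.Adj j j'
    · rw [hnbr_eq j j' hadj]
      exact (integrable_ind (fun ω => A ω ⟨s(j, j'), (SimpleGraph.mem_edgeSet G).mpr hadj⟩)
        (hAmeas _) h).const_mul _
    · rw [hnbr_zero j j' hadj]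
      exact integrable_const 0
  have Ibound : Integrable (fun ω => ∑ j : V,
      ((if x j = z j then (0:ℝ) else if B ω j ≤ h then 1 else 0) +
        ∑ j' : V, nbrTerm G h x z (A ω) j j') / h) ℙ := by
    apply integrable_finset_sum
    intro j _
    exact ((IArec j).add (integrable_finset_sum _ fun j' _ => IA j j')).div_const h
  -- step 1 : pointwise bound
  have step1 : ∫ ω, ∑ j : V, |sisF G h x (A ω) (B ω) j - sisF G h z (A ω) (B ω) j| ∂ℙ ≤
      ∫ ω, (∑ j : V, ((if x j = z j then (0:ℝ) else if B ω j ≤ h then 1 else 0) +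
        ∑ j' : V, nbrTerm G h x z (A ω) j j') / h) ∂ℙ := by
    apply integral_mono_of_nonneg
    · exact Filter.Eventually.of_forall fun ω => Finset.sum_nonneg fun j _ => abs_nonneg _
    · exact Ibound
    · exact Filter.Eventually.of_forall fun ω =>
        Finset.sum_le_sum fun j _ => pointwise_bound G h0 x z (A ω) (B ω) j
  -- step 2 : push the integral inside the sums
  have step2 : ∫ ω, (∑ j : V, ((if x j = z j then (0:ℝ) else if B ω j ≤ h then 1 else 0) +
        ∑ j' : V, nbrTerm G h x z (A ω) j j') / h) ∂ℙ =
      ∑ j : V, ((∫ ω, (if x j = z j then (0:ℝ) else if B ω j ≤ h then 1 else 0) ∂ℙ) +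
        ∑ j' : V, ∫ ω, nbrTerm G h x z (A ω) j j' ∂ℙ) / h := by
    rw [integral_finset_sum]
    swap
    · intro j _
      exact ((IArec j).add (integrable_finset_sum _ fun j' _ => IA j j')).div_const h
    refine Finset.sum_congr rfl fun j _ => ?_
    rw [integral_div, integral_add (IArec j) (integrable_finset_sum _ fun j' _ => IA j j'),
      integral_finset_sum _ fun j' _ => IA j j']
  -- step 3 : bound each expectation
  have hrec_le : ∀ j : V, ∫ ω, (if x j = z j then (0:ℝ) else if B ω j ≤ h then 1 else 0) ∂ℙ ≤
      μ * h * diffInd x z j := by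
    intro j
    by_cases hxz : x j = z j
    · simp [hxz, diffInd]
    · simp only [if_neg hxz, diffInd, mul_one]
      exact integral_ind_le hμ h0.le (fun ω => B ω j) (hBmeas j) (hBdist j)
  have hnbr_le : ∀ j j' : V, ∫ ω, nbrTerm G h x z (A ω) j j' ∂ℙ ≤ h * cAdj G x z j j' := by
    intro j j'
    by_cases hadj : G.Adj j j'
    · rw [hnbr_eq j j' hadj, integral_const_mul, cAdj, if_pos hadj]
      have := integral_ind_le one_pos h0.le
        (fun ω => A ω ⟨s(j, j'), (SimpleGraph.mem_edgeSet G).mpr hadj⟩) (hAmeas _) (hAdist _)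
      rw [one_mul] at this
      calc cInd x z j j' * ∫ ω, (if A ω ⟨s(j, j'), (SimpleGraph.mem_edgeSet G).mpr hadj⟩ ≤ h
            then (1:ℝ) else 0) ∂ℙ ≤ cInd x z j j' * h :=
          mul_le_mul_of_nonneg_left this (cInd_nonneg x z j j')
        _ = h * cInd x z j j' := mul_comm _ _
    · rw [hnbr_zero j j' hadj, cAdj, if_neg hadj, mul_zero]
      simp
  -- step 4 : combine
  have step4 : ∑ j : V, ((∫ ω, (if x j = z j then (0:ℝ) else if B ω j ≤ h then 1 else 0) ∂ℙ) +
        ∑ j' : V, ∫ ω, nbrTerm G h x z (A ω) j j' ∂ℙ) / h ≤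
      ∑ j : V, (μ * h * diffInd x z j + ∑ j' : V, h * cAdj G x z j j') / h := by
    refine Finset.sum_le_sum fun j _ => ?_
    gcongr
    · exact hrec_le j
    · exact hnbr_le j _
  have step5 : ∑ j : V, (μ * h * diffInd x z j + ∑ j' : V, h * cAdj G x z j j') / h =
      μ * (∑ j : V, diffInd x z j) + ∑ j : V, ∑ j' : V, cAdj G x z j j' := by
    have e : ∀ j : V, (μ * h * diffInd x z j + ∑ j' : V, h * cAdj G x z j j') / h =
        μ * diffInd x z j + ∑ j' : V, cAdj G x z j j' := by
      intro j
      rw [← Finset.mul_sum]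
      field_simp
    simp only [e]
    rw [Finset.sum_add_distrib, ← Finset.mul_sum]
  have habs : ∑ j : V, |boolToR (x j) - boolToR (z j)| = ∑ j : V, diffInd x z j :=
    Finset.sum_congr rfl fun j _ => by
      cases hx : x j <;> cases hz : z j <;> simp [boolToR, diffInd, hx, hz] <;> norm_num
  have hsum_c := sum_cAdj_le G k hdeg x z
  rw [habs]
  calc ∫ ω, ∑ j : V, |sisF G h x (A ω) (B ω) j - sisF G h z (A ω) (B ω) j| ∂ℙ
      ≤ ∑ j : V, ((∫ ω, (if x j = z j then (0:ℝ) else if B ω j ≤ h then 1 else 0) ∂ℙ) +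
          ∑ j' : V, ∫ ω, nbrTerm G h x z (A ω) j j' ∂ℙ) / h := step1.trans_eq step2
    _ ≤ ∑ j : V, (μ * h * diffInd x z j + ∑ j' : V, h * cAdj G x z j j') / h := step4
    _ = μ * (∑ j : V, diffInd x z j) + ∑ j : V, ∑ j' : V, cAdj G x z j j' := step5
    _ ≤ ((k : ℝ) + μ) * ∑ j : V, diffInd x z j := by linarith
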